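/- Let G be a group acting on a set X, let s₁, s₂ ∈ G, set s₀ := s₁ * s₂, and assume s₀² = 1, s₀ ≠ 1, s₁ ≠ 1, s₂ ≠ 1 and that the cyclic subgroups ⟨s₀⟩, ⟨s₁⟩, ⟨s₂⟩ intersect pairwise trivially. Let v ∈ X have trivial stabilizer, and define the base edges e₀, e₁, e₂ and base faces F₂⁰ := {e₀, e₁, s₁ • e₂}, F₂¹ := {s₁ᵏ • e₁ : k ∈ ℤ}, F₂² := {s₂ᵏ • e₂ : k ∈ ℤ}. Then the G-orbits of F₂⁰, F₂¹, F₂² are pairwise disjoint: for all g, h ∈ G and all i ≠ j in {0, 1, 2}, g • F₂^i ≠ h • F₂^j. Hence every face of the snub has a uniquely determined type. -/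

import Mathlib

open Pointwise

/-- The base edges of the snub: `e₀ = {v, (s₁s₂)•v}`, `e₁ = {v, s₁•v}`, `e₂ = {v, s₂•v}`. -/
def snubBaseEdge {G X : Type*} [Group G] [MulAction G X] (s₁ s₂ : G) (v : X) :
    Fin 3 → Set X :=
  ![{v, (s₁ * s₂) • v}, {v, s₁ • v}, {v, s₂ • v}]

/-- The base faces of the snub: `F₂⁰ = {e₀, e₁, s₁ • e₂}`, `F₂¹ = {s₁ᵏ • e₁ : k ∈ ℤ}`,
`F₂² = {s₂ᵏ • e₂ : k ∈ ℤ}`. -/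
def snubBaseFace {G X : Type*} [Group G] [MulAction G X] (s₁ s₂ : G) (v : X) :
    Fin 3 → Set (Set X) :=
  ![{snubBaseEdge s₁ s₂ v 0, snubBaseEdge s₁ s₂ v 1, s₁ • snubBaseEdge s₁ s₂ v 2},
    {E | ∃ k : ℤ, E = s₁ ^ k • snubBaseEdge s₁ s₂ v 1},
    {E | ∃ k : ℤ, E = s₂ ^ k • snubBaseEdge s₁ s₂ v 2}]

/-- sUnion commutes with the pointwise action of `G` on `Set (Set X)`. -/
lemma snub_sUnion_smul {G X : Type*} [Group G] [MulAction G X] (g : G) (F : Set (Set X)) :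
    ⋃₀ (g • F) = g • ⋃₀ F := by
  ext x
  simp only [Set.mem_sUnion, Set.mem_smul_set_iff_inv_smul_mem]
  constructor
  · rintro ⟨E, hE, hx⟩
    exact ⟨g⁻¹ • E, hE, Set.smul_mem_smul_set hx⟩
  · rintro ⟨E, hE, hx⟩
    exact ⟨g • E, by simpa [inv_smul_smul] using hE,
      Set.mem_smul_set_iff_inv_smul_mem.mpr hx⟩

lemma snub_memV1 {G X : Type*} [Group G] [MulAction G X] (s₁ s₂ : G) (v : X) (x : X) :
    x ∈ ⋃₀ (snubBaseFace s₁ s₂ v 1) ↔ ∃ k : ℤ, x = s₁ ^ k • v := by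
  simp only [snubBaseFace, snubBaseEdge, Matrix.cons_val_one, Matrix.head_cons,
    Matrix.cons_val_zero, Set.mem_sUnion, Set.mem_setOf_eq]
  constructor
  · rintro ⟨E, ⟨k, rfl⟩, hx⟩
    rw [Set.smul_set_insert, Set.smul_set_singleton] at hx
    rcases hx with hx | hx
    · exact ⟨k, hx⟩
    · refine ⟨k + 1, ?_⟩
      simp only [Set.mem_singleton_iff] at hx
      rw [hx, zpow_add_one, mul_smul]
  · rintro ⟨k, rfl⟩
    exact ⟨_, ⟨k, rfl⟩, by rw [Set.smul_set_insert]; exact Or.inl rfl⟩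

lemma snub_memV2 {G X : Type*} [Group G] [MulAction G X] (s₁ s₂ : G) (v : X) (x : X) :
    x ∈ ⋃₀ (snubBaseFace s₁ s₂ v 2) ↔ ∃ k : ℤ, x = s₂ ^ k • v := by
  simp only [snubBaseFace, snubBaseEdge, Matrix.cons_val_two, Matrix.tail_cons,
    Matrix.head_cons, Set.mem_sUnion, Set.mem_setOf_eq]
  constructor
  · rintro ⟨E, ⟨k, rfl⟩, hx⟩
    rw [Set.smul_set_insert, Set.smul_set_singleton] at hx
    rcases hx with hx | hx
    · exact ⟨k, hx⟩
    · refine ⟨k + 1, ?_⟩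
      simp only [Set.mem_singleton_iff] at hx
      rw [hx, zpow_add_one, mul_smul]
  · rintro ⟨k, rfl⟩
    exact ⟨_, ⟨k, rfl⟩, by rw [Set.smul_set_insert]; exact Or.inl rfl⟩

lemma snub_memV0_v {G X : Type*} [Group G] [MulAction G X] (s₁ s₂ : G) (v : X) :
    v ∈ ⋃₀ (snubBaseFace s₁ s₂ v 0) := by
  refine ⟨snubBaseEdge s₁ s₂ v 0, Or.inl rfl, ?_⟩
  simp [snubBaseEdge]

lemma snub_memV0_s0 {G X : Type*} [Group G] [MulAction G X] (s₁ s₂ : G) (v : X) :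
    (s₁ * s₂) • v ∈ ⋃₀ (snubBaseFace s₁ s₂ v 0) := by
  refine ⟨snubBaseEdge s₁ s₂ v 0, Or.inl rfl, ?_⟩
  simp [snubBaseEdge]

lemma snub_memV0_s1 {G X : Type*} [Group G] [MulAction G X] (s₁ s₂ : G) (v : X) :
    s₁ • v ∈ ⋃₀ (snubBaseFace s₁ s₂ v 0) := by
  refine ⟨snubBaseEdge s₁ s₂ v 1, Or.inr (Or.inl rfl), ?_⟩
  simp [snubBaseEdge]

/-- Key extraction lemma: if `A = t • B` where `B`'s points are exactly the `⟨s⟩`-orbit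
of `v`, and both `v` and `x • v` lie in `A`, then `x ∈ ⟨s⟩`. -/
lemma snub_key {G X : Type*} [Group G] [MulAction G X] (v : X)
    (hv' : ∀ a b : G, a • v = b • v → a = b) (s x t : G) (A B : Set X)
    (hB : ∀ y, y ∈ B ↔ ∃ k : ℤ, y = s ^ k • v)
    (hU : A = t • B) (hvA : v ∈ A) (hxA : x • v ∈ A) :
    x ∈ Subgroup.zpowers s := by
  rw [hU, Set.mem_smul_set_iff_inv_smul_mem, hB] at hvA hxA
  obtain ⟨k, hk⟩ := hvA
  obtain ⟨m, hm⟩ := hxA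
  have h1 : t⁻¹ = s ^ k := hv' _ _ (by simpa using hk)
  have h2 : t⁻¹ * x = s ^ m := hv' _ _ (by rw [mul_smul]; exact hm)
  have hx : x = s ^ (-k) * s ^ m := by
    rw [zpow_neg, ← h1, ← h2, inv_inv, ← mul_assoc, mul_inv_cancel, one_mul]
  rw [hx]
  exact mul_mem (zpow_mem (Subgroup.mem_zpowers s) _) (zpow_mem (Subgroup.mem_zpowers s) _)

lemma snub_case01 {G X : Type*} [Group G] [MulAction G X] (s₁ s₂ : G)
    (hs0 : s₁ * s₂ ≠ 1)
    (h01 : Subgroup.zpowers (s₁ * s₂) ⊓ Subgroup.zpowers s₁ = ⊥)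
    (v : X) (hv' : ∀ a b : G, a • v = b • v → a = b) (t : G)
    (hU : ⋃₀ (snubBaseFace s₁ s₂ v 0) = t • ⋃₀ (snubBaseFace s₁ s₂ v 1)) : False := by
  have hmem : (s₁ * s₂) ∈ Subgroup.zpowers s₁ :=
    snub_key v hv' s₁ (s₁ * s₂) t _ _ (snub_memV1 s₁ s₂ v) hU
      (snub_memV0_v s₁ s₂ v) (snub_memV0_s0 s₁ s₂ v)
  have : (s₁ * s₂) ∈ Subgroup.zpowers (s₁ * s₂) ⊓ Subgroup.zpowers s₁ :=
    ⟨Subgroup.mem_zpowers _, hmem⟩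
  rw [h01, Subgroup.mem_bot] at this
  exact hs0 this

lemma snub_case02 {G X : Type*} [Group G] [MulAction G X] (s₁ s₂ : G)
    (hs1 : s₁ ≠ 1)
    (h12 : Subgroup.zpowers s₁ ⊓ Subgroup.zpowers s₂ = ⊥)
    (v : X) (hv' : ∀ a b : G, a • v = b • v → a = b) (t : G)
    (hU : ⋃₀ (snubBaseFace s₁ s₂ v 0) = t • ⋃₀ (snubBaseFace s₁ s₂ v 2)) : False := by
  have hmem : s₁ ∈ Subgroup.zpowers s₂ :=
    snub_key v hv' s₂ s₁ t _ _ (snub_memV2 s₁ s₂ v) hU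
      (snub_memV0_v s₁ s₂ v) (snub_memV0_s1 s₁ s₂ v)
  have : s₁ ∈ Subgroup.zpowers s₁ ⊓ Subgroup.zpowers s₂ := ⟨Subgroup.mem_zpowers _, hmem⟩
  rw [h12, Subgroup.mem_bot] at this
  exact hs1 this

lemma snub_case12 {G X : Type*} [Group G] [MulAction G X] (s₁ s₂ : G)
    (hs1 : s₁ ≠ 1)
    (h12 : Subgroup.zpowers s₁ ⊓ Subgroup.zpowers s₂ = ⊥)
    (v : X) (hv' : ∀ a b : G, a • v = b • v → a = b) (t : G)
    (hU : ⋃₀ (snubBaseFace s₁ s₂ v 1) = t • ⋃₀ (snubBaseFace s₁ s₂ v 2)) : False := by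
  have hv1 : v ∈ ⋃₀ (snubBaseFace s₁ s₂ v 1) :=
    (snub_memV1 s₁ s₂ v v).mpr ⟨0, by simp⟩
  have hs1v : s₁ • v ∈ ⋃₀ (snubBaseFace s₁ s₂ v 1) :=
    (snub_memV1 s₁ s₂ v _).mpr ⟨1, by simp⟩
  have hmem : s₁ ∈ Subgroup.zpowers s₂ :=
    snub_key v hv' s₂ s₁ t _ _ (snub_memV2 s₁ s₂ v) hU hv1 hs1v
  have : s₁ ∈ Subgroup.zpowers s₁ ⊓ Subgroup.zpowers s₂ := ⟨Subgroup.mem_zpowers _, hmem⟩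
  rw [h12, Subgroup.mem_bot] at this
  exact hs1 this

/-- With `s₀ := s₁s₂` an involution, `s₀, s₁, s₂` nontrivial, the cyclic subgroups they
generate intersecting pairwise trivially, and `v` a point with trivial stabilizer, the
`G`-orbits of the three base faces `F₂⁰, F₂¹, F₂²` are pairwise disjoint: every face of the
snub has a uniquely determined type. -/
theorem snub_faces_have_unique_type {G X : Type*} [Group G] [MulAction G X]
    (s₁ s₂ : G) (h0 : (s₁ * s₂) ^ 2 = 1)
    (hs0 : s₁ * s₂ ≠ 1) (hs1 : s₁ ≠ 1) (hs2 : s₂ ≠ 1)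
    (h01 : Subgroup.zpowers (s₁ * s₂) ⊓ Subgroup.zpowers s₁ = ⊥)
    (h02 : Subgroup.zpowers (s₁ * s₂) ⊓ Subgroup.zpowers s₂ = ⊥)
    (h12 : Subgroup.zpowers s₁ ⊓ Subgroup.zpowers s₂ = ⊥)
    (v : X) (hv : ∀ g : G, g • v = v → g = 1) :
    ∀ (g h : G) (i j : Fin 3), i ≠ j →
      g • snubBaseFace s₁ s₂ v i ≠ h • snubBaseFace s₁ s₂ v j := by
  have hv' : ∀ a b : G, a • v = b • v → a = b := by
    intro a b hab
    have : (b⁻¹ * a) • v = v := by rw [mul_smul, hab, inv_smul_smul]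
    exact (inv_mul_eq_one.mp (hv _ this)).symm
  intro g h i j hij heq
  have hU : ⋃₀ (snubBaseFace s₁ s₂ v i) = (g⁻¹ * h) • ⋃₀ (snubBaseFace s₁ s₂ v j) := by
    have h1 := congrArg Set.sUnion heq
    rw [snub_sUnion_smul, snub_sUnion_smul] at h1
    calc ⋃₀ (snubBaseFace s₁ s₂ v i)
        = g⁻¹ • g • ⋃₀ (snubBaseFace s₁ s₂ v i) := (inv_smul_smul g _).symm
      _ = g⁻¹ • h • ⋃₀ (snubBaseFace s₁ s₂ v j) := by rw [h1]
      _ = (g⁻¹ * h) • ⋃₀ (snubBaseFace s₁ s₂ v j) := (mul_smul _ _ _).symm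
  have hflip : ∀ {i' j' : Fin 3} {t : G},
      ⋃₀ (snubBaseFace s₁ s₂ v i') = t • ⋃₀ (snubBaseFace s₁ s₂ v j') →
      ⋃₀ (snubBaseFace s₁ s₂ v j') = t⁻¹ • ⋃₀ (snubBaseFace s₁ s₂ v i') := by
    intro i' j' t ht
    rw [ht, inv_smul_smul]
  fin_cases i <;> fin_cases j <;> first
    | exact hij rfl
    | exact snub_case01 s₁ s₂ hs0 h01 v hv' _ hU
    | exact snub_case02 s₁ s₂ hs1 h12 v hv' _ hU
    | exact snub_case12 s₁ s₂ hs1 h12 v hv' _ hU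
    | exact snub_case01 s₁ s₂ hs0 h01 v hv' _ (hflip hU)
    | exact snub_case02 s₁ s₂ hs1 h12 v hv' _ (hflip hU)
    | exact snub_case12 s₁ s₂ hs1 h12 v hv' _ (hflip hU)
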